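/- arXiv:1605.03738 — 3 statements merged into one kernel-verified Lean document; each statement's English description precedes it below -/
import Mathlib

section
/- One iteration of the incremental subgradient method: Let f_1,…,f_K : H → [0,∞) be convex continuous functions on a real Hilbert space H, C ⊂ H nonempty closed convex, and suppose for each i there is M_i > 0 with ‖g‖ ≤ M_i for all x ∈ C and g ∈ ∂f_i(x). Set M := ∑_i M_i. Given x ∈ C, step-sizes λ_i ∈ [λ̲, λ̄] ⊂ (0,∞), define y_0 := x and y_i := P_C(y_{i−1} − λ_i g_i) where g_i ∈ ∂f_i(y_{i−1}). Then for all y ∈ C: ‖y_K − y‖² ≤ ‖x − y‖² − 2∑_{i=1}^K λ_i (f_i(x) − f_i(y)) + λ̄² M². -/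
open Filter Topology Finset InnerProductSpace

/-- `g` is a subgradient of `f` at `x`. -/
def IsSubgrad {H : Type*} [NormedAddCommGroup H] [InnerProductSpace ℝ H]
    (f : H → ℝ) (x g : H) : Prop :=
  ∀ z : H, f x + ⟪z - x, g⟫_ℝ ≤ f z

/-- The projection map is a contraction toward points of `C`. -/
lemma proj_contract {H : Type*} [NormedAddCommGroup H] [InnerProductSpace ℝ H]
    (C : Set H) (hCcv : Convex ℝ C)
    (P : H → H) (hP : ∀ u : H, P u ∈ C ∧ ∀ z ∈ C, ‖u - P u‖ ≤ ‖u - z‖)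
    (u z : H) (hz : z ∈ C) : ‖P u - z‖ ≤ ‖u - z‖ := by
  obtain ⟨hvC, hvmin⟩ := hP u
  have hinf : ‖u - P u‖ = ⨅ w : C, ‖u - w‖ := by
    haveI : Nonempty C := ⟨⟨P u, hvC⟩⟩
    apply le_antisymm
    · exact le_ciInf fun w => hvmin w w.2
    · have hb : BddBelow (Set.range fun w : C => ‖u - (w : H)‖) := by
        refine ⟨0, ?_⟩; rintro r ⟨w, rfl⟩; exact norm_nonneg _
      exact ciInf_le hb ⟨P u, hvC⟩
  have hvar := (norm_eq_iInf_iff_real_inner_le_zero hCcv hvC).mp hinf z hz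
  have h1 : ‖u - z‖ ^ 2 = ‖u - P u‖ ^ 2 + 2 * ⟪u - P u, P u - z⟫_ℝ + ‖P u - z‖ ^ 2 := by
    have : u - z = (u - P u) + (P u - z) := by abel
    rw [this, norm_add_sq_real]
  have h2 : ⟪u - P u, P u - z⟫_ℝ = - ⟪u - P u, z - P u⟫_ℝ := by
    rw [show P u - z = -(z - P u) by abel, inner_neg_right]
  have hsq : ‖P u - z‖ ^ 2 ≤ ‖u - z‖ ^ 2 := by
    nlinarith [sq_nonneg ‖u - P u‖]
  nlinarith [norm_nonneg (P u - z), norm_nonneg (u - z)]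

/-- Existence of a subgradient of a convex continuous function at any point of a
real Hilbert space, via geometric Hahn–Banach applied to the strict epigraph. -/
lemma exists_subgrad {H : Type*} [NormedAddCommGroup H] [InnerProductSpace ℝ H]
    [CompleteSpace H] (f : H → ℝ) (hconv : ConvexOn ℝ Set.univ f) (hcont : Continuous f)
    (x : H) : ∃ g : H, IsSubgrad f x g := by
  set S : Set (H × ℝ) := {p | f p.1 < p.2} with hSdef
  have hSconv : Convex ℝ S := by
    rintro p hp q hq a b ha hb hab
    simp only [hSdef, Set.mem_setOf_eq] at hp hq ⊢
    have hcvx := hconv.2 (Set.mem_univ p.1) (Set.mem_univ q.1) ha hb hab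
    simp only [smul_eq_mul] at hcvx
    have h1 : f ((a • p + b • q).1) = f (a • p.1 + b • q.1) := rfl
    have h2 : (a • p + b • q).2 = a * p.2 + b * q.2 := rfl
    rw [h1, h2]
    rcases eq_or_lt_of_le ha with ha' | ha'
    · have hb1 : b = 1 := by linarith
      have : a * f p.1 = 0 := by rw [← ha']; ring
      have hq2 : b * f q.1 < b * q.2 := by rw [hb1]; simpa using hq
      nlinarith [mul_le_mul_of_nonneg_left hp.le ha]
    · have h3 : a * f p.1 < a * p.2 := by exact (mul_lt_mul_iff_right₀ ha').mpr hp
      have h4 : b * f q.1 ≤ b * q.2 := mul_le_mul_of_nonneg_left hq.le hb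
      linarith
  have hSopen : IsOpen S := isOpen_lt (hcont.comp continuous_fst) continuous_snd
  have hxS : (x, f x) ∉ S := by simp [hSdef]
  obtain ⟨φ, hφ⟩ := geometric_hahn_banach_open_point hSconv hSopen hxS
  set c : ℝ := φ (0, 1) with hcdef
  have hdecomp : ∀ (u : H) (t : ℝ), φ (u, t) = φ (u, 0) + t * c := by
    intro u t
    have he : (u, t) = (u, (0 : ℝ)) + t • ((0 : H), (1 : ℝ)) := by
      simp [Prod.ext_iff]
    rw [he, map_add, map_smul, smul_eq_mul, hcdef]
  have hkey : ∀ (u : H) (t : ℝ), f u < t → φ (u, 0) + t * c < φ (x, 0) + f x * c := by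
    intro u t hut
    have h := hφ (u, t) hut
    rwa [hdecomp u t, hdecomp x (f x)] at h
  have hc : c < 0 := by
    have := hkey x (f x + 1) (by linarith)
    linarith
  have hle : ∀ u : H, φ (u, 0) + f u * c ≤ φ (x, 0) + f x * c := by
    intro u
    by_contra hcon
    push_neg at hcon
    set δ : ℝ := φ (u, 0) + f u * c - (φ (x, 0) + f x * c) with hδdef
    have hδpos : 0 < δ := by linarith
    have hεpos : 0 < δ / (2 * (-c)) := div_pos hδpos (by linarith)
    have hk := hkey u (f u + δ / (2 * (-c))) (by linarith)
    have hεc : (δ / (2 * (-c))) * c = -(δ / 2) := by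
      field_simp [hc.ne]
    nlinarith [hk]
  set L : H →L[ℝ] ℝ := φ.comp (ContinuousLinearMap.inl ℝ H ℝ) with hLdef
  have hLval : ∀ u : H, L u = φ (u, 0) := fun u => rfl
  refine ⟨(InnerProductSpace.toDual ℝ H).symm ((-c)⁻¹ • L), ?_⟩
  intro z
  have hinner : ⟪z - x, (InnerProductSpace.toDual ℝ H).symm ((-c)⁻¹ • L)⟫_ℝ
      = (-c)⁻¹ * L (z - x) := by
    rw [real_inner_comm]
    rw [InnerProductSpace.toDual_symm_apply]
    simp
  have hLsub : L (z - x) = φ (z, 0) - φ (x, 0) := by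
    have : ((z - x : H), (0 : ℝ)) = ((z, (0 : ℝ)) : H × ℝ) - (x, 0) := by
      simp [Prod.ext_iff]
    rw [hLval, this, map_sub]
  have h := hle z
  have he : φ (z, 0) - φ (x, 0) ≤ (f x - f z) * c := by linarith
  have hipos : (0 : ℝ) < (-c)⁻¹ := inv_pos.mpr (by linarith)
  have h2 : (-c)⁻¹ * (φ (z, 0) - φ (x, 0)) ≤ (-c)⁻¹ * ((f x - f z) * c) :=
    mul_le_mul_of_nonneg_left he hipos.le
  have h3 : (-c)⁻¹ * ((f x - f z) * c) = f z - f x := by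
    field_simp [hc.ne]
    ring
  rw [hinner, hLsub]
  linarith

set_option maxHeartbeats 1000000 in
theorem incremental_step_inequality {H : Type*} [NormedAddCommGroup H] [InnerProductSpace ℝ H]
    [CompleteSpace H] (C : Set H) (hCne : C.Nonempty) (hCcl : IsClosed C) (hCcv : Convex ℝ C)
    (P : H → H) (hP : ∀ u : H, P u ∈ C ∧ ∀ z ∈ C, ‖u - P u‖ ≤ ‖u - z‖)
    (K : ℕ) (hK : 0 < K)
    (f : ℕ → H → ℝ) (hfnn : ∀ i x, 0 ≤ f i x)
    (hfconv : ∀ i, ConvexOn ℝ Set.univ (f i)) (hfcont : ∀ i, Continuous (f i))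
    (Mi : ℕ → ℝ) (hMi : ∀ i, 0 < Mi i)
    (hbdd : ∀ i, 1 ≤ i → i ≤ K → ∀ x ∈ C, ∀ g : H, IsSubgrad (f i) x g → ‖g‖ ≤ Mi i)
    (lo hi : ℝ) (hlo : 0 < lo) (hlohi : lo ≤ hi)
    (x : H) (hx : x ∈ C)
    (lam : ℕ → ℝ) (hlam : ∀ i, 1 ≤ i → i ≤ K → lam i ∈ Set.Icc lo hi)
    (g : ℕ → H) (y : ℕ → H) (hy0 : y 0 = x)
    (hrec : ∀ i, 1 ≤ i → i ≤ K →
      IsSubgrad (f i) (y (i - 1)) (g i) ∧ y i = P (y (i - 1) - lam i • g i)) :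
    ∀ z ∈ C,
      ‖y K - z‖ ^ 2 ≤ ‖x - z‖ ^ 2 - 2 * ∑ i ∈ Finset.Icc 1 K, lam i * (f i x - f i z) +
        hi ^ 2 * (∑ i ∈ Finset.Icc 1 K, Mi i) ^ 2 := by
  intro z hz
  have hhi : 0 < hi := lt_of_lt_of_le hlo hlohi
  -- membership of iterates
  have hyC : ∀ n, n ≤ K → y n ∈ C := by
    intro n
    induction n with
    | zero => intro _; rw [hy0]; exact hx
    | succ m ih =>
      intro hm
      have h1 : 1 ≤ m + 1 := Nat.succ_le_succ (Nat.zero_le m)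
      rw [(hrec (m + 1) h1 hm).2]
      exact (hP _).1
  -- step displacement bound
  have hstep : ∀ i, 1 ≤ i → i ≤ K → ‖y i - y (i - 1)‖ ≤ hi * Mi i := by
    intro i h1 h2
    obtain ⟨hsub, hyi⟩ := hrec i h1 h2
    have hmC : y (i - 1) ∈ C := hyC _ (le_trans (Nat.sub_le i 1) h2)
    have hg : ‖g i‖ ≤ Mi i := hbdd i h1 h2 _ hmC _ hsub
    have hl := hlam i h1 h2
    calc ‖y i - y (i - 1)‖
        = ‖P (y (i - 1) - lam i • g i) - y (i - 1)‖ := by rw [hyi]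
      _ ≤ ‖(y (i - 1) - lam i • g i) - y (i - 1)‖ :=
          proj_contract C hCcv P hP _ _ hmC
      _ = ‖lam i • g i‖ := by
          rw [show (y (i - 1) - lam i • g i) - y (i - 1) = -(lam i • g i) by abel, norm_neg]
      _ = lam i * ‖g i‖ := by
          rw [norm_smul, Real.norm_eq_abs, abs_of_pos (lt_of_lt_of_le hlo hl.1)]
      _ ≤ hi * Mi i := mul_le_mul hl.2 hg (norm_nonneg _) hhi.le
  -- distance to x bound
  have hdist : ∀ n, n ≤ K → ‖y n - x‖ ≤ hi * ∑ i ∈ Finset.Icc 1 n, Mi i := by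
    intro n
    induction n with
    | zero => intro _; simp [hy0]
    | succ m ih =>
      intro hm
      have hm' : m ≤ K := le_trans (Nat.le_succ m) hm
      have h1 : 1 ≤ m + 1 := Nat.succ_le_succ (Nat.zero_le m)
      have hsum : ∑ i ∈ Finset.Icc 1 (m + 1), Mi i = (∑ i ∈ Finset.Icc 1 m, Mi i) + Mi (m + 1) :=
        Finset.sum_Icc_succ_top h1 Mi
      calc ‖y (m + 1) - x‖ ≤ ‖y (m + 1) - y m‖ + ‖y m - x‖ :=
            norm_sub_le_norm_sub_add_norm_sub _ _ _
        _ ≤ hi * Mi (m + 1) + hi * ∑ i ∈ Finset.Icc 1 m, Mi i := by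
            have h2 := hstep (m + 1) h1 hm
            simp only [Nat.add_sub_cancel] at h2
            exact add_le_add h2 (ih hm')
        _ = hi * ∑ i ∈ Finset.Icc 1 (m + 1), Mi i := by rw [hsum]; ring
  -- nonnegativity of the M-sums
  have hSnn : ∀ n, 0 ≤ ∑ i ∈ Finset.Icc 1 n, Mi i :=
    fun n => Finset.sum_nonneg fun i _ => (hMi i).le
  -- main induction
  have main : ∀ n, n ≤ K →
      ‖y n - z‖ ^ 2 ≤ ‖x - z‖ ^ 2 - 2 * ∑ i ∈ Finset.Icc 1 n, lam i * (f i x - f i z) +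
        hi ^ 2 * (∑ i ∈ Finset.Icc 1 n, Mi i) ^ 2 := by
    intro n
    induction n with
    | zero => intro _; simp [hy0]
    | succ m ih =>
      intro hm
      have hm' : m ≤ K := le_trans (Nat.le_succ m) hm
      have IH := ih hm'
      have h1 : 1 ≤ m + 1 := Nat.succ_le_succ (Nat.zero_le m)
      obtain ⟨hsub, hyi⟩ := hrec (m + 1) h1 hm
      simp only [Nat.add_sub_cancel] at hsub hyi
      have hmC : y m ∈ C := hyC m hm'
      have hg : ‖g (m + 1)‖ ≤ Mi (m + 1) := hbdd (m + 1) h1 hm _ hmC _ hsub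
      have hl := hlam (m + 1) h1 hm
      have hlpos : 0 < lam (m + 1) := lt_of_lt_of_le hlo hl.1
      set l := lam (m + 1) with hldef
      set G := g (m + 1) with hGdef
      set S := ∑ i ∈ Finset.Icc 1 m, Mi i with hSdef
      -- expansion of the squared norm
      have hexp : ‖(y m - l • G) - z‖ ^ 2
          = ‖y m - z‖ ^ 2 - 2 * l * ⟪y m - z, G⟫_ℝ + l ^ 2 * ‖G‖ ^ 2 := by
        have e : (y m - l • G) - z = (y m - z) - l • G := by abel
        rw [e, norm_sub_sq_real, real_inner_smul_right, norm_smul, Real.norm_eq_abs,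
          mul_pow, sq_abs]
        ring
      -- projection contraction
      have hproj : ‖y (m + 1) - z‖ ^ 2 ≤ ‖(y m - l • G) - z‖ ^ 2 := by
        have hc := proj_contract C hCcv P hP (y m - l • G) z hz
        rw [hyi]
        nlinarith [norm_nonneg (P (y m - l • G) - z)]
      -- subgradient inequality at y m, toward z
      have hsub_z : f (m + 1) (y m) - f (m + 1) z ≤ ⟪y m - z, G⟫_ℝ := by
        have h := hsub z
        have e : ⟪z - y m, G⟫_ℝ = - ⟪y m - z, G⟫_ℝ := by
          rw [show z - y m = -(y m - z) by abel, inner_neg_left]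
        rw [e] at h
        linarith
      -- subgradient at x gives the Lipschitz-type lower bound on f (m+1) (y m)
      obtain ⟨gx, hgx⟩ := exists_subgrad (f (m + 1)) (hfconv (m + 1)) (hfcont (m + 1)) x
      have hgxn : ‖gx‖ ≤ Mi (m + 1) := hbdd (m + 1) h1 hm x hx gx hgx
      have hsub_x : f (m + 1) x - Mi (m + 1) * ‖x - y m‖ ≤ f (m + 1) (y m) := by
        have h := hgx (y m)
        have hip : -(‖y m - x‖ * ‖gx‖) ≤ ⟪y m - x, gx⟫_ℝ := by
          have habs := abs_real_inner_le_norm (y m - x) gx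
          have := neg_abs_le ⟪y m - x, gx⟫_ℝ
          linarith
        have hnrev : ‖y m - x‖ = ‖x - y m‖ := norm_sub_rev _ _
        have hmul : ‖x - y m‖ * ‖gx‖ ≤ ‖x - y m‖ * Mi (m + 1) :=
          mul_le_mul_of_nonneg_left hgxn (norm_nonneg _)
        rw [hnrev] at hip
        nlinarith [hip, hmul]
      have hxy : ‖x - y m‖ ≤ hi * S := by
        rw [norm_sub_rev]; exact hdist m hm'
      have hsum1 : ∑ i ∈ Finset.Icc 1 (m + 1), lam i * (f i x - f i z)
          = (∑ i ∈ Finset.Icc 1 m, lam i * (f i x - f i z)) + l * (f (m + 1) x - f (m + 1) z) :=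
        Finset.sum_Icc_succ_top h1 _
      have hsum2 : ∑ i ∈ Finset.Icc 1 (m + 1), Mi i = S + Mi (m + 1) :=
        Finset.sum_Icc_succ_top h1 Mi
      rw [hsum1, hsum2]
      have hMnn := (hMi (m + 1)).le
      have hSnn' := hSnn m
      have e1 : ‖y (m + 1) - z‖ ^ 2
          ≤ ‖y m - z‖ ^ 2 - 2 * l * ⟪y m - z, G⟫_ℝ + l ^ 2 * ‖G‖ ^ 2 := by
        linarith [hproj, hexp.le]
      have e2 : l * (f (m + 1) (y m) - f (m + 1) z) ≤ l * ⟪y m - z, G⟫_ℝ :=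
        mul_le_mul_of_nonneg_left hsub_z hlpos.le
      have e3 : l * (f (m + 1) x - f (m + 1) z) - l * (Mi (m + 1) * ‖x - y m‖)
          ≤ l * ⟪y m - z, G⟫_ℝ := by
        nlinarith [mul_le_mul_of_nonneg_left hsub_x hlpos.le, e2]
      have e4 : l * (Mi (m + 1) * ‖x - y m‖) ≤ hi * (Mi (m + 1) * (hi * S)) :=
        mul_le_mul hl.2 (mul_le_mul_of_nonneg_left hxy hMnn) (by positivity) hhi.le
      have e5 : l ^ 2 * ‖G‖ ^ 2 ≤ hi ^ 2 * Mi (m + 1) ^ 2 :=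
        mul_le_mul (pow_le_pow_left₀ hlpos.le hl.2 2)
          (pow_le_pow_left₀ (norm_nonneg G) hg 2) (by positivity) (by positivity)
      nlinarith [IH, e1, e3, e4, e5]
  exact main K (le_refl K)
end

section
/- Let f_1,…,f_K : H → [0,∞) be convex continuous, C ⊂ H nonempty closed convex with argmin_{x∈C} f(x) ≠ ∅ where f := ∑_i f_i, and M > 0. Let step-ranges [λ̲_n, λ̄_n] ⊂ (0,∞) satisfy ∑ λ̄_n = ∞, ∑ λ̄_n² < ∞, λ̲_n/λ̄_n → 1, and let λ_{n,i} ∈ [λ̲_n, λ̄_n]. Suppose {x_n} ⊂ C and there is α > 0 such that for every y ∈ C and all n, ‖x_{n+1} − y‖² ≤ ‖x_n − y‖² − 2α ∑_{i=1}^K λ_{n,i}(f_i(x_n) − f_i(y)) + λ̄_n² M². Then liminf_{n→∞} f(x_n) = min_{x∈C} f(x). -/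
open Filter Topology Finset

theorem liminf_eq_min_of_descent {H : Type*} [NormedAddCommGroup H] [InnerProductSpace ℝ H]
    [CompleteSpace H] (C : Set H) (hCne : C.Nonempty) (hCcl : IsClosed C) (hCcv : Convex ℝ C)
    (K : ℕ) (hK : 0 < K)
    (f : ℕ → H → ℝ) (hfnn : ∀ i x, 0 ≤ f i x)
    (hfconv : ∀ i, ConvexOn ℝ Set.univ (f i)) (hfcont : ∀ i, Continuous (f i))
    (M : ℝ) (hM : 0 < M)
    (lo hi : ℕ → ℝ) (hlo : ∀ n, 0 < lo n) (hlohi : ∀ n, lo n ≤ hi n)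
    (hdiv : ¬ Summable hi) (hsq : Summable (fun n => hi n ^ 2))
    (hratio : Tendsto (fun n => lo n / hi n) atTop (𝓝 1))
    (lam : ℕ → ℕ → ℝ) (hlam : ∀ n i, 1 ≤ i → i ≤ K → lam n i ∈ Set.Icc (lo n) (hi n))
    (x : ℕ → H) (hxC : ∀ n, x n ∈ C)
    (alpha : ℝ) (halpha : 0 < alpha)
    (hineq : ∀ y ∈ C, ∀ n : ℕ,
      ‖x (n + 1) - y‖ ^ 2 ≤ ‖x n - y‖ ^ 2 -
        2 * alpha * ∑ i ∈ Finset.Icc 1 K, lam n i * (f i (x n) - f i y) + hi n ^ 2 * M ^ 2)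
    (yhat : H) (hyhat : yhat ∈ C)
    (hmin : ∀ z ∈ C, ∑ i ∈ Finset.Icc 1 K, f i yhat ≤ ∑ i ∈ Finset.Icc 1 K, f i z) :
    Filter.atTop.liminf (fun n => ∑ i ∈ Finset.Icc 1 K, f i (x n)) =
      ∑ i ∈ Finset.Icc 1 K, f i yhat := by
  set F : ℕ → ℝ := fun n => ∑ i ∈ Finset.Icc 1 K, f i (x n) with hF
  set Fs : ℝ := ∑ i ∈ Finset.Icc 1 K, f i yhat with hFs
  have hhi : ∀ n, 0 < hi n := fun n => (hlo n).trans_le (hlohi n)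
  have hFsnn : 0 ≤ Fs := Finset.sum_nonneg fun i _ => hfnn i yhat
  have hFge : ∀ n, Fs ≤ F n := fun n => hmin (x n) (hxC n)
  -- key fact: for every ε > 0, frequently F n < Fs + ε
  have key : ∀ ε : ℝ, 0 < ε → ∃ᶠ n in atTop, F n < Fs + ε := by
    intro ε hε
    by_contra hcon
    rw [not_frequently] at hcon
    push_neg at hcon
    -- hcon : ∀ᶠ n, Fs + ε ≤ F n
    set δ : ℝ := ε / (2 * (Fs + 1)) with hδdef
    have hδ : 0 < δ := by positivity
    have hδε : δ * (Fs + 1) = ε / 2 := by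
      field_simp [hδdef]
      have h2 : (2 * (Fs + 1)) * δ = ε := by rw [hδdef]; field_simp
      linear_combination h2
    -- eventually hi n ≤ (1 + δ) * lo n
    have h1 : ∀ᶠ n in atTop, hi n ≤ (1 + δ) * lo n := by
      have hlt : (1 : ℝ) / (1 + δ) < 1 := by
        rw [div_lt_one (by linarith)]; linarith
      filter_upwards [hratio.eventually (eventually_gt_nhds hlt)] with n hn
      have hn' : 1 / (1 + δ) * hi n < lo n / hi n * hi n :=
        mul_lt_mul_of_pos_right hn (hhi n)
      rw [div_mul_cancel₀ _ (hhi n).ne'] at hn'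
      rw [div_mul_eq_mul_div, div_lt_iff₀ (by linarith)] at hn'
      nlinarith [hlo n]
    -- eventually hi n ≤ 2 * lo n
    have h2 : ∀ᶠ n in atTop, hi n ≤ 2 * lo n := by
      have hlt : (1 : ℝ) / 2 < 1 := by norm_num
      filter_upwards [hratio.eventually (eventually_gt_nhds hlt)] with n hn
      have hn' : 1 / 2 * hi n < lo n / hi n * hi n :=
        mul_lt_mul_of_pos_right hn (hhi n)
      rw [div_mul_cancel₀ _ (hhi n).ne'] at hn'
      linarith
    obtain ⟨N, hN⟩ := eventually_atTop.mp ((hcon.and h1).and h2)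
    -- per-step decrease
    have step : ∀ n, N ≤ n →
        ‖x (n + 1) - yhat‖ ^ 2 ≤ ‖x n - yhat‖ ^ 2 - alpha * ε * lo n + hi n ^ 2 * M ^ 2 := by
      intro n hn
      obtain ⟨⟨hFn, hhl⟩, _⟩ := hN n hn
      have hS : lo n * (F n - Fs) - (hi n - lo n) * Fs ≤
          ∑ i ∈ Finset.Icc 1 K, lam n i * (f i (x n) - f i yhat) := by
        have : lo n * (F n - Fs) - (hi n - lo n) * Fs =
            ∑ i ∈ Finset.Icc 1 K,
              (lo n * (f i (x n) - f i yhat) - (hi n - lo n) * f i yhat) := by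
          rw [Finset.sum_sub_distrib, ← Finset.mul_sum, ← Finset.mul_sum,
            ← Finset.sum_sub_distrib]
        rw [this]
        refine Finset.sum_le_sum fun i hi' => ?_
        obtain ⟨hi1, hi2⟩ := Finset.mem_Icc.mp hi'
        obtain ⟨hll, hlh⟩ := hlam n i hi1 hi2
        have hfy : 0 ≤ f i yhat := hfnn i yhat
        have hfx : 0 ≤ f i (x n) := hfnn i (x n)
        rcases le_or_gt 0 (f i (x n) - f i yhat) with hd | hd
        · nlinarith [mul_nonneg (sub_nonneg.2 hll) hd,
            mul_nonneg (sub_nonneg.2 (hlohi n)) hfy]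
        · nlinarith [mul_nonpos_of_nonneg_of_nonpos (sub_nonneg.2 hlh) hd.le,
            mul_nonneg (sub_nonneg.2 (hlohi n)) hfx]
      have hbase := hineq yhat hyhat n
      -- lower bound on the sum term
      have hA : lo n * ε ≤ lo n * (F n - Fs) :=
        mul_le_mul_of_nonneg_left (by linarith) (hlo n).le
      have hB : (hi n - lo n) * Fs ≤ (δ * lo n) * Fs := by
        have : hi n - lo n ≤ δ * lo n := by linarith
        exact mul_le_mul_of_nonneg_right this hFsnn
      have hC : (δ * lo n) * Fs ≤ (ε / 2) * lo n := by
        have h1' : δ * Fs ≤ ε / 2 := by nlinarith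
        nlinarith [hlo n]
      have hS2 : (ε / 2) * lo n ≤
          ∑ i ∈ Finset.Icc 1 K, lam n i * (f i (x n) - f i yhat) := by linarith
      nlinarith [mul_le_mul_of_nonneg_left hS2 (by linarith : (0:ℝ) ≤ 2 * alpha)]
    -- telescoping
    have htel : ∀ m : ℕ, ‖x (N + m) - yhat‖ ^ 2 ≤ ‖x N - yhat‖ ^ 2 -
        alpha * ε * (∑ k ∈ Finset.range m, lo (N + k)) +
        M ^ 2 * ∑ k ∈ Finset.range m, hi (N + k) ^ 2 := by
      intro m
      induction m with
      | zero => simp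
      | succ m ih =>
        have hst := step (N + m) (Nat.le_add_right N m)
        rw [Finset.sum_range_succ, Finset.sum_range_succ]
        have : N + (m + 1) = N + m + 1 := by ring
        rw [this]
        linarith [hst, ih]
    -- summability contradiction
    have hsq' : Summable fun k => hi (N + k) ^ 2 := by
      have := (summable_nat_add_iff N).2 hsq
      simpa [add_comm] using this
    set T : ℝ := ∑' k, hi (N + k) ^ 2 with hT
    have hbound : ∀ m : ℕ, ∑ k ∈ Finset.range m, lo (N + k) ≤
        (‖x N - yhat‖ ^ 2 + M ^ 2 * T) / (alpha * ε) := by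
      intro m
      have h1' := htel m
      have h2' : ∑ k ∈ Finset.range m, hi (N + k) ^ 2 ≤ T :=
        Summable.sum_le_tsum _ (fun k _ => sq_nonneg _) hsq'
      have h3' : (0:ℝ) ≤ ‖x (N + m) - yhat‖ ^ 2 := sq_nonneg _
      rw [le_div_iff₀ (by positivity)]
      have h4' := mul_le_mul_of_nonneg_left h2' (sq_nonneg M)
      nlinarith
    have hlosum : Summable fun k => lo (N + k) :=
      summable_of_sum_range_le (fun k => (hlo _).le) hbound
    have hhisum : Summable fun k => hi (N + k) := by
      refine Summable.of_nonneg_of_le (fun k => (hhi _).le) (fun k => ?_)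
        (hlosum.mul_left 2)
      exact (hN (N + k) (Nat.le_add_right N k)).2
    exact hdiv ((summable_nat_add_iff N).1 (by simpa [add_comm] using hhisum))
  -- conclude
  have hcob : IsCoboundedUnder (· ≥ ·) atTop F :=
    IsCoboundedUnder.of_frequently_le ((key 1 one_pos).mono fun n h => h.le)
  have hbdd : IsBoundedUnder (· ≥ ·) atTop F :=
    isBoundedUnder_of ⟨Fs, fun n => hFge n⟩
  have hge : Fs ≤ atTop.liminf F := le_liminf_of_le hcob (Eventually.of_forall hFge)
  have hle : atTop.liminf F ≤ Fs := by
    refine le_of_forall_pos_le_add fun ε hε => ?_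
    exact liminf_le_of_frequently_le ((key ε hε).mono fun n h => h.le) hbdd
  exact le_antisymm hle hge
end

section
/- Under the hypotheses of the liminf lemma (the sequence {x_n} ⊂ C satisfies ‖x_{n+1} − y‖² ≤ ‖x_n − y‖² − 2α ∑_i λ_{n,i}(f_i(x_n) − f_i(y)) + λ̄_n² M² for all y ∈ C, with f_i ≥ 0, λ_{n,i} ∈ [λ̲_n, λ̄_n], ∑ λ̄_n = ∞, ∑ λ̄_n² < ∞), one has liminf_{n→∞} ∑_{i=1}^K (λ_{n,i}/λ̄_n) f_i(x_n) ≤ min_{x∈C} f(x). -/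
open Filter Topology Finset

theorem liminf_weighted_le_min {H : Type*} [NormedAddCommGroup H] [InnerProductSpace ℝ H]
    [CompleteSpace H] (C : Set H) (hCne : C.Nonempty) (hCcl : IsClosed C) (hCcv : Convex ℝ C)
    (K : ℕ) (hK : 0 < K)
    (f : ℕ → H → ℝ) (hfnn : ∀ i x, 0 ≤ f i x)
    (hfconv : ∀ i, ConvexOn ℝ Set.univ (f i)) (hfcont : ∀ i, Continuous (f i))
    (M : ℝ) (hM : 0 < M)
    (lo hi : ℕ → ℝ) (hlo : ∀ n, 0 < lo n) (hlohi : ∀ n, lo n ≤ hi n)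
    (hdiv : ¬ Summable hi) (hsq : Summable (fun n => hi n ^ 2))
    (lam : ℕ → ℕ → ℝ) (hlam : ∀ n i, 1 ≤ i → i ≤ K → lam n i ∈ Set.Icc (lo n) (hi n))
    (x : ℕ → H) (hxC : ∀ n, x n ∈ C)
    (alpha : ℝ) (halpha : 0 < alpha)
    (hineq : ∀ y ∈ C, ∀ n : ℕ,
      ‖x (n + 1) - y‖ ^ 2 ≤ ‖x n - y‖ ^ 2 -
        2 * alpha * ∑ i ∈ Finset.Icc 1 K, lam n i * (f i (x n) - f i y) + hi n ^ 2 * M ^ 2)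
    (yhat : H) (hyhat : yhat ∈ C)
    (hmin : ∀ z ∈ C, ∑ i ∈ Finset.Icc 1 K, f i yhat ≤ ∑ i ∈ Finset.Icc 1 K, f i z) :
    Filter.atTop.liminf (fun n => ∑ i ∈ Finset.Icc 1 K, (lam n i / hi n) * f i (x n)) ≤
      ∑ i ∈ Finset.Icc 1 K, f i yhat := by

  set S := ∑ i ∈ Finset.Icc 1 K, f i yhat with hSdef
  have hS0 : 0 ≤ S := Finset.sum_nonneg fun i _ => hfnn i yhat
  rw [Filter.liminf_eq]
  apply Real.sSup_le _ hS0
  rintro a ha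
  simp only [Set.mem_setOf_eq] at ha
  by_contra hcon
  push_neg at hcon
  have hε0 : 0 < a - S := by linarith
  obtain ⟨N, hN⟩ := Filter.eventually_atTop.mp ha
  have key : ∀ n, N ≤ n → ‖x (n+1) - yhat‖^2 ≤
      ‖x n - yhat‖^2 - 2*alpha*(a - S)*hi n + hi n^2 * M^2 := by
    intro n hn
    have h1 := hineq yhat hyhat n
    have hhi : 0 < hi n := lt_of_lt_of_le (hlo n) (hlohi n)
    have hsum : (a - S) * hi n ≤ ∑ i ∈ Finset.Icc 1 K, lam n i * (f i (x n) - f i yhat) := by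
      have e1 : ∑ i ∈ Finset.Icc 1 K, lam n i * f i (x n)
          = hi n * ∑ i ∈ Finset.Icc 1 K, (lam n i / hi n) * f i (x n) := by
        rw [Finset.mul_sum]
        refine Finset.sum_congr rfl fun i _ => ?_
        field_simp
      have e2 : ∑ i ∈ Finset.Icc 1 K, lam n i * f i yhat ≤ hi n * S := by
        rw [hSdef, Finset.mul_sum]
        refine Finset.sum_le_sum fun i hi' => ?_
        obtain ⟨hi1, hi2⟩ := Finset.mem_Icc.mp hi'
        exact mul_le_mul_of_nonneg_right (hlam n i hi1 hi2).2 (hfnn i yhat)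
      have e3 : a ≤ ∑ i ∈ Finset.Icc 1 K, (lam n i / hi n) * f i (x n) := hN n hn
      have e4 : hi n * a ≤ ∑ i ∈ Finset.Icc 1 K, lam n i * f i (x n) := by
        rw [e1]; exact mul_le_mul_of_nonneg_left e3 hhi.le
      have e5 : ∑ i ∈ Finset.Icc 1 K, lam n i * (f i (x n) - f i yhat)
          = (∑ i ∈ Finset.Icc 1 K, lam n i * f i (x n))
            - ∑ i ∈ Finset.Icc 1 K, lam n i * f i yhat := by
        rw [← Finset.sum_sub_distrib]
        exact Finset.sum_congr rfl fun i _ => by ring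
      rw [e5]; nlinarith
    nlinarith [mul_le_mul_of_nonneg_left hsum (by positivity : (0:ℝ) ≤ 2*alpha)]
  have tel : ∀ m : ℕ, 2*alpha*(a-S) * ∑ k ∈ Finset.range m, hi (N+k)
      ≤ ‖x N - yhat‖^2 - ‖x (N+m) - yhat‖^2 + M^2 * ∑ k ∈ Finset.range m, hi (N+k)^2 := by
    intro m
    induction m with
    | zero => simp
    | succ m ih =>
      have hk := key (N+m) (Nat.le_add_right N m)
      rw [Finset.sum_range_succ, Finset.sum_range_succ]
      have hstep : N + (m+1) = (N+m)+1 := rfl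
      rw [hstep]
      nlinarith [hk, ih]
  have hTsum : Summable (fun k => hi (N + k)^2) := by
    have := (summable_nat_add_iff N).2 hsq
    simpa [add_comm] using this
  set T := ∑' k, hi (N + k)^2 with hTdef
  have hbound : ∀ m, ∑ k ∈ Finset.range m, hi (N+k)
      ≤ (‖x N - yhat‖^2 + M^2*T)/(2*alpha*(a-S)) := by
    intro m
    have h1 := tel m
    have h2 : ∑ k ∈ Finset.range m, hi (N+k)^2 ≤ T := by
      exact Summable.sum_le_tsum (Finset.range m) (fun i _ => sq_nonneg _) hTsum
    have h3 : 0 ≤ ‖x (N+m) - yhat‖^2 := sq_nonneg _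
    rw [le_div_iff₀ (by positivity)]
    nlinarith [mul_le_mul_of_nonneg_left h2 (sq_nonneg M)]
  have hs : Summable (fun k => hi (N + k)) :=
    summable_of_sum_range_le (fun k => (lt_of_lt_of_le (hlo _) (hlohi _)).le) hbound
  exact hdiv ((summable_nat_add_iff N).1 (by simpa [add_comm] using hs))
end
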